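/- Let μ > 0, 0 < d < 1/2, and r ∈ ℝ. Consider h(w, z) = (1/2)(w − r)² + μz + d(w²/z − w²) for w ∈ ℝ and z ∈ (0, 1], with h(0, 0) = (1/2)r² and h(w, 0) = +∞ for w ≠ 0. Then the infimum of h over w ∈ ℝ, z ∈ [0,1] equals φ̄(r; d), i.e., it equals (1/2)r² if |r| ≤ 2√(μd); (−d r² + 2√(μd)|r| − 2μd)/(1 − 2d) if 2√(μd) < |r| < √(μ/d); and μ if |r| ≥ √(μ/d). -/

import Mathlib

set_option maxHeartbeats 1600000


/-- The perspective-relaxation loss φ̄(r; d) for parameters μ > 0, d ∈ (0,1/2). -/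
noncomputable def phiBar (mu d r : ℝ) : ℝ :=
  if |r| ≤ 2 * Real.sqrt (mu * d) then (1/2) * r^2
  else if |r| < Real.sqrt (mu / d) then
    (-(d * r^2) + 2 * Real.sqrt (mu * d) * |r| - 2 * mu * d) / (1 - 2*d)
  else mu

/-- The objective h(w,z) = (1/2)(w−r)² + μz + d(w²/z − w²), EReal-valued,
with the conventions h(0,0) = (1/2)r² and h(w,0) = +∞ for w ≠ 0. -/
noncomputable def hObj (mu d r w z : ℝ) : EReal :=
  if z = 0 then (if w = 0 then (((1/2) * (w - r)^2 : ℝ) : EReal) else ⊤)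
  else (((1/2) * (w - r)^2 + mu * z + d * (w^2 / z - w^2) : ℝ) : EReal)

lemma phiBar_lb (mu d r : ℝ) (hmu : 0 < mu) (hd0 : 0 < d) (hd : d < 1/2)
    (w z : ℝ) (hz : 0 < z) (hz1 : z ≤ 1) :
    phiBar mu d r ≤ (1/2) * (w - r)^2 + mu * z + d * (w^2 / z - w^2) := by
  unfold phiBar
  set s := Real.sqrt (mu*d) with hs
  set t := Real.sqrt (mu/d) with ht
  have hs2 : s^2 = mu*d := Real.sq_sqrt (by positivity)
  have hs0 : 0 < s := Real.sqrt_pos.mpr (by positivity)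
  have ht2 : t^2 = mu/d := Real.sq_sqrt (by positivity)
  have ht0 : 0 < t := Real.sqrt_pos.mpr (by positivity)
  have hdt2 : mu = d * t^2 := by rw [ht2]; field_simp
  clear_value s t
  have h2d : (0:ℝ) < 1 - 2*d := by linarith
  have hq : w^2/z * z = w^2 := div_mul_cancel₀ _ hz.ne'
  have hq0 : 0 ≤ w^2/z := div_nonneg (sq_nonneg w) hz.le
  have hwr : w * r ≤ |w| * |r| := (le_abs_self _).trans_eq (abs_mul w r)
  have habs : (|w| - |r|)^2 ≤ (w - r)^2 := by
    nlinarith [hwr, sq_abs w, sq_abs r]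
  have hA : 2*s*|w| ≤ mu*z + d*(w^2/z) := by
    nlinarith [sq_nonneg (mu*z - s*|w|), sq_abs w, mul_pos hmu hz, hq]
  split_ifs with h1 h2
  · nlinarith [hA, sq_abs w, sq_abs r, abs_nonneg w,
      mul_le_mul_of_nonneg_right h1 (abs_nonneg w), hwr, sq_nonneg w]
  · rw [div_le_iff₀ h2d]
    have m0 : -(d*|r|^2) + 2*s*|r| - 2*s^2 ≤
        (1-2*d)*((1/2)*(|w|-|r|)^2 + 2*s*|w| - d*|w|^2) := by
      nlinarith [sq_nonneg ((1-2*d)*|w| - (|r| - 2*s))]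
    rw [sq_abs, sq_abs, hs2] at m0
    have mid : -(d*r^2) + 2*s*|r| - 2*(mu*d) ≤
        (1-2*d)*((1/2)*(w-r)^2 + 2*s*|w| - d*w^2) := by
      nlinarith [m0, habs, h2d]
    have k3 : (1-2*d)*(2*s*|w|) ≤ (1-2*d)*(mu*z + d*(w^2/z)) := by nlinarith [hA]
    linarith [mid, k3]
  · push_neg at h1 h2
    by_cases hdw : mu ≤ d*w^2
    · have hdq : mu ≤ d*(w^2/z) := by
        nlinarith [hq, hdw, hz, hz1, mul_nonneg (mul_nonneg hd0.le hq0) (sub_nonneg.2 hz1)]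
      have hB : mu ≤ mu*z + d*(w^2/z - w^2) := by
        nlinarith [hq, mul_nonneg (sub_nonneg.2 hz1) (sub_nonneg.2 hdq)]
      nlinarith [hB, sq_nonneg (w - r)]
    · push_neg at hdw
      have hwt : |w| < t := by
        by_contra hc; push_neg at hc
        nlinarith [mul_le_mul hc hc ht0.le (abs_nonneg w), abs_mul_abs_self w]
      have hprod : 0 ≤ (|r| - t) * (|r| + t - 2*|w|) := by
        apply mul_nonneg <;> nlinarith [abs_nonneg w]
      have hsdt : s = d*t := by
        have hh : (d*t)^2 = s^2 := by rw [hs2, mul_pow, ht2]; field_simp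
        nlinarith [mul_pos hd0 ht0, hs0, hh]
      have k0 : mu ≤ (1/2)*(|w| - |r|)^2 + 2*s*|w| - d*|w|^2 := by
        rw [hsdt, hdt2]
        nlinarith [hprod, sq_nonneg (t - |w|)]
      rw [sq_abs] at k0
      linarith [hA, k0, habs]

lemma phiBar_le_half (mu d r : ℝ) (hmu : 0 < mu) (hd0 : 0 < d) (hd : d < 1/2) :
    phiBar mu d r ≤ (1/2) * r^2 := by
  unfold phiBar
  set s := Real.sqrt (mu*d) with hs
  set t := Real.sqrt (mu/d) with ht
  have hs2 : s^2 = mu*d := Real.sq_sqrt (by positivity)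
  have hs0 : 0 < s := Real.sqrt_pos.mpr (by positivity)
  have ht2 : t^2 = mu/d := Real.sq_sqrt (by positivity)
  have ht0 : 0 < t := Real.sqrt_pos.mpr (by positivity)
  have hdt2 : mu = d * t^2 := by rw [ht2]; field_simp
  clear_value s t
  have h2d : (0:ℝ) < 1 - 2*d := by linarith
  split_ifs with h1 h2
  · exact le_refl _
  · rw [div_le_iff₀ h2d]
    nlinarith [sq_nonneg (|r| - 2*s), sq_abs r, hs2]
  · push_neg at h1 h2
    nlinarith [mul_le_mul h2 h2 ht0.le (abs_nonneg r), abs_mul_abs_self r, hdt2, ht0]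

theorem stmt_6 (mu d r : ℝ) (hmu : 0 < mu) (hd0 : 0 < d) (hd : d < 1/2) :
    sInf {v : EReal | ∃ w z : ℝ, 0 ≤ z ∧ z ≤ 1 ∧ v = hObj mu d r w z}
      = ((phiBar mu d r : ℝ) : EReal) := by
  have hs2 : (Real.sqrt (mu*d))^2 = mu*d := Real.sq_sqrt (by positivity)
  have hs0 : 0 < Real.sqrt (mu*d) := Real.sqrt_pos.mpr (by positivity)
  have ht2 : (Real.sqrt (mu/d))^2 = mu/d := Real.sq_sqrt (by positivity)
  have ht0 : 0 < Real.sqrt (mu/d) := Real.sqrt_pos.mpr (by positivity)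
  have h2d : (0:ℝ) < 1 - 2*d := by linarith
  apply le_antisymm
  · -- sInf ≤ phiBar : exhibit the minimizer
    apply sInf_le
    set s := Real.sqrt (mu*d) with hs
    set t := Real.sqrt (mu/d) with ht
    have hdt2 : mu = d * t^2 := by rw [ht2]; field_simp
    have hsdt : s = d*t := by
      have hh : (d*t)^2 = s^2 := by rw [hs2, mul_pow, ht2]; field_simp
      nlinarith [mul_pos hd0 ht0, hs0, hh]
    have hst : s*t = mu := by nlinarith [hsdt, hdt2]
    by_cases h1 : |r| ≤ 2*s
    · refine ⟨0, 0, le_refl _, zero_le_one, ?_⟩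
      have hv : phiBar mu d r = (1/2)*((0:ℝ)-r)^2 := by
        rw [phiBar, if_pos h1]; ring
      simp [hObj, hv]
    · by_cases h2 : |r| < t
      · -- interior case
        push_neg at h1
        set u := (|r| - 2*s)/(1-2*d) with hu
        have hu0 : 0 < u := div_pos (by linarith) h2d
        have huu : u * (1-2*d) = |r| - 2*s := div_mul_cancel₀ _ h2d.ne'
        have hut : u < t := by
          rw [hu, div_lt_iff₀ h2d]; nlinarith [hsdt, h2]
        set zs := u*s/mu with hzs
        have hzs0 : 0 < zs := by positivity
        have hzs1 : zs ≤ 1 := by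
          rw [hzs, div_le_one hmu]
          nlinarith [hut, hs0, hst]
        refine ⟨if 0 ≤ r then u else -u, zs, hzs0.le, hzs1, ?_⟩
        rw [hObj, if_neg hzs0.ne']
        rw [EReal.coe_eq_coe_iff]
        have hw2 : (if 0 ≤ r then u else -u)^2 = u^2 := by split_ifs <;> ring
        have hwr2 : ((if 0 ≤ r then u else -u) - r)^2 = (u - |r|)^2 := by
          split_ifs with hr
          · rw [abs_of_nonneg hr]
          · rw [abs_of_neg (not_le.1 hr)]; ring
        rw [hw2, hwr2]
        have e1 : mu * zs = u*s := by rw [hzs]; field_simp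
        have e3 : u^2/zs = u*mu/s := by
          rw [hzs]; field_simp [hs0.ne', hmu.ne', hu0.ne']
        have e4 : d*(u*mu/s) = u*s := by
          rw [mul_div_assoc', div_eq_iff hs0.ne']
          linear_combination -u * hs2
        rw [phiBar, if_neg (not_le.2 h1), if_pos h2, e1, e3]
        rw [div_eq_iff h2d.ne']
        have expand : d * (u * mu / s - u ^ 2) = u*s - d*u^2 := by
          rw [mul_sub, e4]
        rw [expand]
        nlinarith [huu, hs2, sq_abs r]
      · push_neg at h2
        refine ⟨r, 1, zero_le_one, le_refl _, ?_⟩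
        rw [hObj, if_neg one_ne_zero, EReal.coe_eq_coe_iff]
        rw [phiBar, if_neg h1, if_neg (not_lt.2 h2)]
        field_simp
        ring
  · apply le_sInf
    rintro v ⟨w, z, hz0, hz1, rfl⟩
    rw [hObj]
    split_ifs with hzz hww
    · rw [EReal.coe_le_coe_iff]
      subst hww
      calc phiBar mu d r ≤ (1/2)*r^2 := phiBar_le_half mu d r hmu hd0 hd
        _ = 1/2*((0:ℝ)-r)^2 := by ring
    · exact le_top
    · exact EReal.coe_le_coe_iff.mpr
        (phiBar_lb mu d r hmu hd0 hd w z (hz0.lt_of_ne' hzz) hz1)
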